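/- Let R > 0, let V ∈ 𝒮(ℝ²) satisfy 𝓕V(ξ) = 1 for all |ξ| ≤ 2R, and let ψ ∈ 𝒮(ℝ²×ℝ²) satisfy 𝓕ψ(ξ₁,ξ₂) = 0 whenever |ξ₁| > R or |ξ₂| > R. Then ∫∫_{ℝ²×ℝ²} V(x₁−x₂) |ψ(x₁,x₂)|² dx₁dx₂ = ∫_{ℝ²} |ψ(x,x)|² dx; that is, for frequency-localized ψ the smooth convolution potential V acts on |ψ|² exactly as the Dirac delta δ(x₁−x₂). -/

import Mathlib

noncomputable section

open MeasureTheory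
open scoped FourierTransform RealInnerProductSpace ComplexConjugate

/-- `ℝ²` as a Euclidean space. -/
abbrev R2 : Type := EuclideanSpace ℝ (Fin 2)

/-- `ℝ² × ℝ²` as a Euclidean space. -/
abbrev D2 : Type := EuclideanSpace ℝ (Fin 2 × Fin 2)

/-- The point `(x₁, x₂) ∈ ℝ² × ℝ²`. -/
def pack (a b : R2) : D2 :=
  (EuclideanSpace.equiv (Fin 2 × Fin 2) ℝ).symm fun p =>
    if p.1 = 0 then EuclideanSpace.equiv (Fin 2) ℝ a p.2
    else EuclideanSpace.equiv (Fin 2) ℝ b p.2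

/-- The `i`-th `ℝ²`-component of a point of `ℝ² × ℝ²`. -/
def projv (i : Fin 2) (x : D2) : R2 :=
  (EuclideanSpace.equiv (Fin 2) ℝ).symm fun a =>
    EuclideanSpace.equiv (Fin 2 × Fin 2) ℝ x (i, a)

lemma pack_apply (a b : R2) (p : Fin 2 × Fin 2) :
    pack a b p = if p.1 = 0 then a p.2 else b p.2 := rfl

lemma projv_apply (i : Fin 2) (x : D2) (a : Fin 2) : projv i x a = x (i, a) := rfl

@[simp] lemma projv_zero_pack (a b : R2) : projv 0 (pack a b) = a := by
  ext j; simp [projv_apply, pack_apply]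

@[simp] lemma projv_one_pack (a b : R2) : projv 1 (pack a b) = b := by
  ext j; simp [projv_apply, pack_apply]

@[simp] lemma pack_projv (x : D2) : pack (projv 0 x) (projv 1 x) = x := by
  ext p
  obtain ⟨i, j⟩ := p
  fin_cases i <;> simp [pack_apply, projv_apply]

lemma projv_sub (i : Fin 2) (x y : D2) : projv i (x - y) = projv i x - projv i y := by
  ext j; simp [projv_apply]

lemma projv_neg (i : Fin 2) (x : D2) : projv i (-x) = -(projv i x) := by
  ext j; simp [projv_apply]

lemma pack_add (a b c d : R2) : pack (a + c) (b + d) = pack a b + pack c d := by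
  ext p; by_cases h : p.1 = 0 <;> simp [pack_apply, h]

lemma pack_smul (r : ℝ) (a b : R2) : pack (r • a) (r • b) = r • pack a b := by
  ext p; by_cases h : p.1 = 0 <;> simp [pack_apply, h]

lemma pack_sub (a b c d : R2) : pack (a - c) (b - d) = pack a b - pack c d := by
  ext p; by_cases h : p.1 = 0 <;> simp [pack_apply, h]

lemma inner_pack (a b c d : R2) : ⟪pack a b, pack c d⟫ = ⟪a, c⟫ + ⟪b, d⟫ := by
  simp only [PiLp.inner_apply, RCLike.inner_apply, starRingEnd_apply, star_trivial]
  rw [Fintype.sum_prod_type, Fin.sum_univ_two]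
  simp [pack_apply]

lemma norm_pack_sq (a b : R2) : ‖pack a b‖ ^ 2 = ‖a‖ ^ 2 + ‖b‖ ^ 2 := by
  rw [← real_inner_self_eq_norm_sq, ← real_inner_self_eq_norm_sq, ← real_inner_self_eq_norm_sq,
    inner_pack]

/-- Reindexing `Fin 2 ⊕ Fin 2 ≃ Fin 2 × Fin 2`. -/
def σEquiv : (Fin 2 ⊕ Fin 2) ≃ (Fin 2 × Fin 2) where
  toFun := Sum.elim (fun j => (0, j)) (fun j => (1, j))
  invFun p := if p.1 = 0 then Sum.inl p.2 else Sum.inr p.2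
  left_inv := by rintro (j | j) <;> simp
  right_inv := by
    rintro ⟨i, j⟩
    fin_cases i <;> simp

def packME : (R2 × R2) ≃ᵐ D2 :=
  ((MeasurableEquiv.toLp 2 (Fin 2 → ℝ)).symm.prodCongr
      (MeasurableEquiv.toLp 2 (Fin 2 → ℝ)).symm).trans <|
    ((MeasurableEquiv.sumPiEquivProdPi (fun _ : Fin 2 ⊕ Fin 2 => ℝ)).symm.trans <|
      (MeasurableEquiv.piCongrLeft (fun _ : Fin 2 × Fin 2 => ℝ) σEquiv).trans
        (MeasurableEquiv.toLp 2 (Fin 2 × Fin 2 → ℝ)))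

lemma packME_apply (p : R2 × R2) : packME p = pack p.1 p.2 := by
  ext ⟨i, j⟩
  fin_cases i <;>
    simp [packME, pack_apply, MeasurableEquiv.piCongrLeft, Equiv.piCongrLeft,
      MeasurableEquiv.sumPiEquivProdPi, σEquiv, MeasurableEquiv.coe_toLp, MeasurableEquiv.coe_toLp_symm,
      MeasurableEquiv.prodCongr, Equiv.piCongrLeft', MeasurableEquiv.trans]

lemma packMP : MeasurePreserving packME volume volume := by
  have h1 := (EuclideanSpace.volume_preserving_symm_measurableEquiv_toLp (Fin 2)).prod
    (EuclideanSpace.volume_preserving_symm_measurableEquiv_toLp (Fin 2))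
  have h2 := MeasureTheory.volume_measurePreserving_sumPiEquivProdPi_symm
    (fun _ : Fin 2 ⊕ Fin 2 => ℝ)
  have h3 := MeasureTheory.volume_measurePreserving_piCongrLeft
    (fun _ : Fin 2 × Fin 2 => ℝ) σEquiv
  have h4 := (EuclideanSpace.volume_preserving_symm_measurableEquiv_toLp (Fin 2 × Fin 2)).symm
  have := (((h4.comp h3).comp h2).comp h1)
  rw [← MeasureTheory.Measure.volume_eq_prod] at this
  exact this

/-- Transfer an integral over `D2` to an iterated integral over `R2 × R2`. -/
lemma integral_pack {E : Type*} [NormedAddCommGroup E] [NormedSpace ℝ E] (f : D2 → E)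
    (hf : Integrable f) :
    ∫ z : D2, f z = ∫ x₁ : R2, ∫ x₂ : R2, f (pack x₁ x₂) := by
  have h1 : ∫ z : D2, f z = ∫ p : R2 × R2, f (packME p) :=
    (packMP.integral_comp packME.measurableEmbedding f).symm
  rw [h1]
  have h2 : Integrable (fun p : R2 × R2 => f (packME p)) volume :=
    (packMP.integrable_comp_emb packME.measurableEmbedding).2 hf
  rw [MeasureTheory.Measure.volume_eq_prod] at h2 ⊢
  rw [MeasureTheory.integral_prod _ h2]
  simp_rw [packME_apply]

lemma schwartz_temperate {E F : Type*} [NormedAddCommGroup E] [NormedSpace ℝ E]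
    [NormedAddCommGroup F] [NormedSpace ℝ F] (f : SchwartzMap E F) :
    Function.HasTemperateGrowth (⇑f) := by
  refine ⟨f.smooth ⊤, fun n => ⟨0, SchwartzMap.seminorm ℝ 0 n f, fun x => ?_⟩⟩
  simpa using f.le_seminorm ℝ 0 n x

/-- The complex conjugate of a Schwartz map. -/
def conjSchwartz {E : Type*} [NormedAddCommGroup E] [NormedSpace ℝ E]
    (f : SchwartzMap E ℂ) : SchwartzMap E ℂ where
  toFun := fun x => conj (f x)
  smooth' := by
    have : (fun x => conj (f x)) = (Complex.conjLIE : ℂ ≃ₗᵢ[ℝ] ℂ) ∘ ⇑f := rfl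
    rw [this]
    exact (Complex.conjLIE.toLinearIsometry.contDiff).comp (f.smooth ⊤)
  decay' := by
    intro k n
    obtain ⟨C, hC⟩ := f.decay' k n
    refine ⟨C, fun x => ?_⟩
    have : (fun x => conj (f x)) = ⇑Complex.conjLIE ∘ ⇑f := rfl
    rw [this, Complex.conjLIE.norm_iteratedFDeriv_comp_left (⇑f) x n]
    exact hC x

@[simp] lemma conjSchwartz_apply {E : Type*} [NormedAddCommGroup E] [NormedSpace ℝ E]
    (f : SchwartzMap E ℂ) (x : E) : conjSchwartz f x = conj (f x) := rfl


instance : (volume : Measure (R2 × R2)).IsAddHaarMeasure := by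
  rw [MeasureTheory.Measure.volume_eq_prod]
  exact MeasureTheory.Measure.prod.instIsAddHaarMeasure _ _

/-- The map `q ↦ pack q.1 (q.1 - q.2)` as a linear equivalence. -/
def packShearLE : (R2 × R2) ≃ₗ[ℝ] D2 where
  toFun q := pack q.1 (q.1 - q.2)
  invFun x := (projv 0 x, projv 0 x - projv 1 x)
  map_add' a b := by
    show pack (a + b).1 ((a + b).1 - (a + b).2) = _
    have h1 : (a + b).1 = a.1 + b.1 := rfl
    have h2 : (a + b).2 = a.2 + b.2 := rfl
    rw [h1, h2, show a.1 + b.1 - (a.2 + b.2) = (a.1 - a.2) + (b.1 - b.2) by abel, pack_add]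
  map_smul' r a := by
    show pack (r • a).1 ((r • a).1 - (r • a).2) = _
    have h1 : (r • a).1 = r • a.1 := rfl
    have h2 : (r • a).2 = r • a.2 := rfl
    rw [h1, h2, ← smul_sub, pack_smul]
    rfl
  left_inv q := by simp
  right_inv x := by simp

def packShearCLE : (R2 × R2) ≃L[ℝ] D2 := packShearLE.toContinuousLinearEquiv

lemma packShearCLE_apply (q : R2 × R2) : packShearCLE q = pack q.1 (q.1 - q.2) := rfl

/-- The map `η ↦ pack η (-η)` as a continuous linear map. -/
def negDiagL : R2 →L[ℝ] D2 :=
  LinearMap.toContinuousLinearMap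
    { toFun := fun η => pack η (-η)
      map_add' := fun a b => by
        show pack (a + b) (-(a + b)) = _
        rw [neg_add, pack_add]
      map_smul' := fun r a => by
        show pack (r • a) (-(r • a)) = _
        rw [← smul_neg, pack_smul]
        rfl }

lemma negDiagL_apply (η : R2) : negDiagL η = pack η (-η) := rfl

lemma negDiagL_anti : AntilipschitzWith 1 ⇑negDiagL := by
  refine AntilipschitzWith.of_le_mul_dist fun x y => ?_
  rw [dist_eq_norm, dist_eq_norm, ← ContinuousLinearMap.map_sub]
  have h : negDiagL (x - y) = pack (x - y) (-(x - y)) := rfl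
  rw [h]
  have h2 : ‖pack (x - y) (-(x - y))‖ ^ 2 = ‖x - y‖ ^ 2 + ‖x - y‖ ^ 2 := by
    rw [norm_pack_sq, norm_neg]
  have h3 : (0 : ℝ) ≤ ‖pack (x - y) (-(x - y))‖ := norm_nonneg _
  have h4 : (0 : ℝ) ≤ ‖x - y‖ := norm_nonneg _
  rw [NNReal.coe_one, one_mul]
  nlinarith

lemma circle_norm (c : Circle) : ‖(c : ℂ)‖ = 1 := by
  exact Circle.norm_coe c

lemma circle_cont : Continuous fun c : Circle => (c : ℂ) := continuous_subtype_val

lemma ec_add (a b : ℝ) :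
    ((Real.fourierChar (a + b) : Circle) : ℂ)
      = (Real.fourierChar a : ℂ) * (Real.fourierChar b : ℂ) := by
  rw [AddChar.map_add_eq_mul, Circle.coe_mul]

/-- inner substitution. -/
lemma inner_subst (Φ : SchwartzMap D2 ℂ) (c : R2 → ℂ) (x₁ : R2) :
    ∫ x₂ : R2, c (x₁ - x₂) * Φ (pack x₁ x₂)
      = ∫ y : R2, c y * Φ (pack x₁ (x₁ - y)) := by
  rw [← integral_sub_left_eq_self (fun x₂ => c (x₁ - x₂) * Φ (pack x₁ x₂)) volume x₁]
  simp [sub_sub_cancel]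

lemma theta_integrable (Φ : SchwartzMap D2 ℂ) :
    Integrable (fun q : R2 × R2 => Φ (pack q.1 (q.1 - q.2))) (volume.prod volume) := by
  have h := (Φ.compCLMOfContinuousLinearEquiv (𝕜 := ℝ) packShearCLE).integrable (μ := volume)
  rw [MeasureTheory.Measure.volume_eq_prod] at h
  have h2 : ⇑((SchwartzMap.compCLMOfContinuousLinearEquiv ℝ packShearCLE) Φ)
      = ⇑Φ ∘ ⇑packShearCLE := rfl
  rw [h2] at h
  exact h.congr (Filter.Eventually.of_forall fun q => by
    rw [Function.comp_apply, packShearCLE_apply])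

/-- The key Fubini step. -/
lemma fubini_key (Φ : SchwartzMap D2 ℂ) (c : R2 → ℂ) (hc : Continuous c)
    (C : ℝ) (hbd : ∀ y, ‖c y‖ ≤ C) :
    ∫ x₁ : R2, ∫ x₂ : R2, c (x₁ - x₂) * Φ (pack x₁ x₂)
      = ∫ y : R2, c y * ∫ x : R2, Φ (pack x (x - y)) := by
  simp_rw [inner_subst Φ c]
  rw [MeasureTheory.integral_integral_swap]
  · simp_rw [integral_const_mul]
  · have h : Integrable (fun q : R2 × R2 => c q.2 * Φ (pack q.1 (q.1 - q.2)))
        (volume.prod volume) := by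
      refine (theta_integrable Φ).bdd_mul (c := C) ?_ (Filter.Eventually.of_forall fun q => hbd q.2)
      exact (hc.comp continuous_snd).aestronglyMeasurable
    exact h

/-- Fourier transform of the conjugate. -/
lemma fourier_conj (f : SchwartzMap D2 ℂ) (ζ : D2) :
    𝓕 (⇑(conjSchwartz f)) ζ = conj (𝓕 (⇑f) (-ζ)) := by
  rw [Real.fourier_eq, Real.fourier_eq, ← integral_conj]
  congr 1
  ext z
  simp only [conjSchwartz_apply, Circle.smul_def, smul_eq_mul, map_mul, inner_neg_right, neg_neg]
  congr 1
  rw [← Circle.coe_inv_eq_conj, ← AddChar.map_neg_eq_inv]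

/-- Convolution representation of the Fourier transform of a pointwise product. -/
lemma fourier_mul (g f : SchwartzMap D2 ℂ) (θ : D2) :
    𝓕 (fun z => g z * f z) θ = ∫ ζ : D2, 𝓕 (⇑g) ζ * 𝓕 (⇑f) (θ - ζ) := by
  have hGs : 𝓕 (⇑g) = ⇑(SchwartzMap.fourierTransformCLM ℂ g) :=
    (SchwartzMap.fourier_coe g).symm
  have hGint : Integrable (𝓕 (⇑g)) volume := by
    rw [hGs]; exact (SchwartzMap.fourierTransformCLM ℂ g).integrable
  have hGcont : Continuous (𝓕 (⇑g)) := by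
    rw [hGs]; exact (SchwartzMap.fourierTransformCLM ℂ g).continuous
  have hinv : ∀ z : D2, g z
      = ∫ ζ : D2, ((Real.fourierChar ⟪ζ, z⟫ : Circle) : ℂ) * 𝓕 (⇑g) ζ := by
    intro z
    conv_lhs => rw [← g.continuous.fourierInv_fourier_eq g.integrable hGint]
    rw [Real.fourierInv_eq]
    simp_rw [Circle.smul_def, smul_eq_mul]
  rw [Real.fourier_eq]
  simp_rw [Circle.smul_def, smul_eq_mul]
  calc
    ∫ z : D2, ((Real.fourierChar (-⟪z, θ⟫) : Circle) : ℂ) * (g z * f z)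
        = ∫ z : D2, ∫ ζ : D2, ((Real.fourierChar (-⟪z, θ⟫) : Circle) : ℂ)
            * (((Real.fourierChar ⟪ζ, z⟫ : Circle) : ℂ) * 𝓕 (⇑g) ζ * f z) := by
        congr 1
        ext z
        rw [hinv z, ← integral_mul_const, ← integral_const_mul]
    _ = ∫ ζ : D2, ∫ z : D2, ((Real.fourierChar (-⟪z, θ⟫) : Circle) : ℂ)
            * (((Real.fourierChar ⟪ζ, z⟫ : Circle) : ℂ) * 𝓕 (⇑g) ζ * f z) := by
        apply MeasureTheory.integral_integral_swap
        have hmaj : Integrable (fun p : D2 × D2 => ‖f p.1‖ * ‖𝓕 (⇑g) p.2‖)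
            (volume.prod volume) := f.integrable.norm.mul_prod hGint.norm
        apply hmaj.mono
        · apply Continuous.aestronglyMeasurable
          have c1 : Continuous fun p : D2 × D2 =>
              ((Real.fourierChar (-⟪p.1, θ⟫) : Circle) : ℂ) := by
            apply circle_cont.comp
            apply Real.continuous_fourierChar.comp
            exact (continuous_fst.inner continuous_const).neg
          have c2 : Continuous fun p : D2 × D2 =>
              ((Real.fourierChar ⟪p.2, p.1⟫ : Circle) : ℂ) := by
            apply circle_cont.comp
            apply Real.continuous_fourierChar.comp
            exact continuous_snd.inner continuous_fst
          exact c1.mul ((c2.mul (hGcont.comp continuous_snd)).mul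
            (f.continuous.comp continuous_fst))
        · refine Filter.Eventually.of_forall fun p => ?_
          simp only [Function.uncurry]
          rw [norm_mul, norm_mul, norm_mul, circle_norm, circle_norm, one_mul, one_mul,
            Real.norm_eq_abs, abs_of_nonneg (by positivity)]
          rw [mul_comm ‖𝓕 (⇑g) p.2‖ ‖f p.1‖]
    _ = ∫ ζ : D2, 𝓕 (⇑g) ζ
            * ∫ z : D2, ((Real.fourierChar (-⟪z, θ - ζ⟫) : Circle) : ℂ) * f z := by
        congr 1
        ext ζ
        rw [← integral_const_mul]
        congr 1
        ext z
        have harg : -⟪z, θ - ζ⟫ = -⟪z, θ⟫ + ⟪ζ, z⟫ := by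
          rw [inner_sub_right, real_inner_comm ζ z]; ring
        rw [harg, ec_add]
        ring
    _ = ∫ ζ : D2, 𝓕 (⇑g) ζ * 𝓕 (⇑f) (θ - ζ) := by
        congr 1



/-- Fourier transform of `y ↦ ∫ x, Φ (pack x (x - y))` on the anti-diagonal. -/
lemma fourier_W (Φ : SchwartzMap D2 ℂ) (η : R2) :
    𝓕 (⇑Φ) (pack η (-η)) = 𝓕 (fun y : R2 => ∫ x : R2, Φ (pack x (x - y))) η := by
  rw [Real.fourier_eq (⇑Φ)]
  rw [integral_pack _ ((Real.fourierIntegral_convergent_iff (pack η (-η))).2 Φ.integrable)]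
  simp_rw [Circle.smul_def, smul_eq_mul]
  have hin : ∀ x₁ x₂ : R2, -⟪pack x₁ x₂, pack η (-η)⟫ = -⟪x₁ - x₂, η⟫ := by
    intro x₁ x₂
    rw [inner_pack, inner_neg_right, inner_sub_left]
    ring
  simp_rw [hin]
  rw [fubini_key Φ (fun y => ((Real.fourierChar (-⟪y, η⟫) : Circle) : ℂ)) ?_ 1 ?_]
  · rw [Real.fourier_eq]
    simp_rw [Circle.smul_def, smul_eq_mul]
  · apply circle_cont.comp
    apply Real.continuous_fourierChar.comp
    exact (continuous_id.inner continuous_const).neg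
  · exact fun y => (circle_norm _).le


/-- **Frequency-localized potentials act as the delta function** (the identity `J_V = J_δ`
in the proof of Lemma 2.9): if `𝓕V = 1` on the ball of radius `2R` and `ψ` has both
frequencies supported in the ball of radius `R`, then
`∫∫ V(x₁−x₂)|ψ(x₁,x₂)|² dx₁dx₂ = ∫ |ψ(x,x)|² dx`. -/
theorem stmt_10 (R : ℝ) (hR : 0 < R) (V : SchwartzMap R2 ℂ)
    (hV : ∀ ξ : R2, ‖ξ‖ ≤ 2 * R → 𝓕 (⇑V) ξ = 1)
    (ψ : SchwartzMap D2 ℂ)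
    (hψ : ∀ ξ : D2, (R < ‖projv 0 ξ‖ ∨ R < ‖projv 1 ξ‖) → 𝓕 (⇑ψ) ξ = 0) :
    (∫ x₁ : R2, ∫ x₂ : R2, V (x₁ - x₂) * ((‖ψ (pack x₁ x₂)‖ ^ 2 : ℝ) : ℂ)) =
      ((∫ x : R2, ‖ψ (pack x x)‖ ^ 2 : ℝ) : ℂ) := by
  classical
  set g : SchwartzMap D2 ℂ := conjSchwartz ψ with hg
  set Φ : SchwartzMap D2 ℂ :=
    SchwartzMap.bilinLeftCLM (ContinuousLinearMap.mul ℝ ℂ) (schwartz_temperate ψ) g with hΦdef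
  have hΦ : ∀ z : D2, Φ z = g z * ψ z := fun z => rfl
  have hcast : ∀ z : ℂ, ((‖z‖ ^ 2 : ℝ) : ℂ) = (starRingEnd ℂ) z * z := by
    intro z
    have h1 : ((‖z‖ ^ 2 : ℝ) : ℂ) = ((Complex.normSq z : ℝ) : ℂ) := by
      rw [Complex.sq_norm]
    rw [h1, ← Complex.mul_conj]
    ring
  have hΦ' : ∀ z : D2, ((‖ψ z‖ ^ 2 : ℝ) : ℂ) = Φ z := by
    intro z
    rw [hcast, hΦ]
    rfl
  set W : R2 → ℂ := fun y => ∫ x : R2, Φ (pack x (x - y)) with hW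
  -- integrability and continuity of W
  have hWint : Integrable W volume := by
    have h := (theta_integrable Φ).integral_prod_right
    simpa using h
  have hWcont : Continuous W := by
    set M : ℝ := 2 ^ 3 *
      ((Finset.Iic ((3, 0) : ℕ × ℕ)).sup (fun m => SchwartzMap.seminorm ℝ m.1 m.2) Φ) with hM
    have hnorm : ∀ (x y : R2), ‖Φ (pack x (x - y))‖ ≤ M * ((1 + ‖x‖) ^ (3 : ℕ))⁻¹ := by
      intro x y
      have hx : ‖x‖ ≤ ‖pack x (x - y)‖ := by
        have h2 := norm_pack_sq x (x - y)
        have h3 : (0 : ℝ) ≤ ‖pack x (x - y)‖ := norm_nonneg _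
        have h4 : (0 : ℝ) ≤ ‖x‖ := norm_nonneg _
        nlinarith [sq_nonneg ‖x - y‖]
      have h1 : (1 + ‖x‖) ^ (3 : ℕ) * ‖Φ (pack x (x - y))‖ ≤ M := by
        calc (1 + ‖x‖) ^ (3 : ℕ) * ‖Φ (pack x (x - y))‖
            ≤ (1 + ‖pack x (x - y)‖) ^ (3 : ℕ) * ‖Φ (pack x (x - y))‖ := by
              gcongr
          _ ≤ M := by
              have := SchwartzMap.one_add_le_sup_seminorm_apply (𝕜 := ℝ)
                (m := ((3, 0) : ℕ × ℕ)) (k := 3) (n := 0) le_rfl le_rfl Φ (pack x (x - y))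
              rwa [norm_iteratedFDeriv_zero] at this
      have hpos : (0 : ℝ) < (1 + ‖x‖) ^ (3 : ℕ) := by positivity
      rw [mul_comm M, inv_mul_eq_div, le_div_iff₀ hpos]
      linarith [h1]
    apply continuous_of_dominated (bound := fun x : R2 => M * ((1 + ‖x‖) ^ (3 : ℕ))⁻¹)
    · intro y
      apply Continuous.aestronglyMeasurable
      exact Φ.continuous.comp (packShearCLE.continuous.comp
        (continuous_id.prodMk continuous_const))
    · intro y
      exact Filter.Eventually.of_forall fun x => hnorm x y
    · have hfr : ((Module.finrank ℝ R2 : ℝ)) < (3 : ℝ) := by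
        rw [finrank_euclideanSpace_fin]; norm_num
      have h := (integrable_one_add_norm (E := R2) (μ := volume) hfr).const_mul M
      apply h.congr
      refine Filter.Eventually.of_forall fun x => ?_
      have e1 : ((1 + ‖x‖ : ℝ)) ^ ((3 : ℕ) : ℝ) = (1 + ‖x‖) ^ (3 : ℕ) :=
        Real.rpow_natCast _ 3
      have e2 : (1 + ‖x‖ : ℝ) ^ (-(3 : ℝ)) = ((1 + ‖x‖) ^ (3 : ℕ))⁻¹ := by
        rw [← e1, ← Real.rpow_neg (by positivity)]
        norm_num
      show M * (1 + ‖x‖) ^ (-(3 : ℝ)) = M * ((1 + ‖x‖) ^ (3 : ℕ))⁻¹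
      rw [e2]
    · exact Filter.Eventually.of_forall fun x =>
        Φ.continuous.comp (packShearCLE.continuous.comp
          (continuous_const.prodMk continuous_id))
  -- Fourier transform of W
  have hFW : ∀ η : R2, 𝓕 W η = 𝓕 (⇑Φ) (pack η (-η)) := fun η => (fourier_W Φ η).symm
  have hFWint : Integrable (𝓕 W) volume := by
    have hΞ := ((SchwartzMap.compCLMOfAntilipschitz ℝ negDiagL.hasTemperateGrowth
      negDiagL_anti) (SchwartzMap.fourierTransformCLM ℂ Φ)).integrable (μ := volume)
    apply hΞ.congr
    refine Filter.Eventually.of_forall fun η => ?_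
    rw [SchwartzMap.compCLMOfAntilipschitz_apply]
    show (SchwartzMap.fourierTransformCLM ℂ Φ) (negDiagL η) = 𝓕 W η
    rw [SchwartzMap.fourierTransformCLM_apply, negDiagL_apply, hFW, SchwartzMap.fourier_coe]
  -- support of 𝓕 W
  have hsupp : ∀ η : R2, 2 * R < ‖η‖ → 𝓕 W η = 0 := by
    intro η hη
    rw [hFW]
    have hΦfun : ⇑Φ = fun z => g z * ψ z := funext hΦ
    rw [hΦfun, fourier_mul g ψ (pack η (-η))]
    have hzero : ∀ ζ : D2, 𝓕 (⇑g) ζ * 𝓕 (⇑ψ) (pack η (-η) - ζ) = 0 := by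
      intro ζ
      by_cases hc : R < ‖projv 0 ζ‖
      · have h1 : R < ‖projv 0 (-ζ)‖ := by rwa [projv_neg, norm_neg]
        rw [hg, fourier_conj ψ ζ, hψ (-ζ) (Or.inl h1), map_zero, zero_mul]
      · push_neg at hc
        have h2 : R < ‖projv 0 (pack η (-η) - ζ)‖ := by
          rw [projv_sub, projv_zero_pack]
          have h3 : ‖η‖ - ‖projv 0 ζ‖ ≤ ‖η - projv 0 ζ‖ := norm_sub_norm_le _ _
          linarith
        rw [hψ _ (Or.inl h2), mul_zero]
    calc ∫ ζ : D2, 𝓕 (⇑g) ζ * 𝓕 (⇑ψ) (pack η (-η) - ζ)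
        = ∫ _ : D2, (0 : ℂ) := by congr 1; ext ζ; exact hzero ζ
      _ = 0 := integral_zero _ _
  -- the inverse Fourier transform of V
  set u : SchwartzMap R2 ℂ := (FourierTransform.fourierCLE ℂ (SchwartzMap R2 ℂ)).symm V with hu
  have huF : 𝓕 (⇑u) = ⇑V := by
    have h1 : (FourierTransform.fourierCLE ℂ (SchwartzMap R2 ℂ)) u = V :=
      (FourierTransform.fourierCLE ℂ (SchwartzMap R2 ℂ)).apply_symm_apply V
    calc 𝓕 (⇑u) = ⇑((FourierTransform.fourierCLE ℂ (SchwartzMap R2 ℂ)) u) :=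
        (SchwartzMap.fourier_coe u).symm
      _ = ⇑V := by rw [h1]
  have huval : ∀ x : R2, ‖x‖ ≤ 2 * R → u x = 1 := by
    intro x hx
    have h1 : ⇑u = 𝓕⁻ ⇑V := by
      rw [hu, FourierTransform.fourierCLE_symm_apply, SchwartzMap.fourierInv_coe]
    have h2 : u x = 𝓕 (⇑V) (-x) := by
      rw [h1]; exact Real.fourierInv_eq_fourier_neg (⇑V) x
    rw [h2]
    exact hV (-x) (by rwa [norm_neg])
  -- the multiplication formula
  have hflip : ∫ ξ : R2, 𝓕 (⇑u) ξ * W ξ = ∫ x : R2, u x * 𝓕 W x := by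
    have hL : Continuous fun p : R2 × R2 => (innerₗ R2) p.1 p.2 := continuous_inner
    have hLflip : (innerₗ R2).flip = innerₗ R2 := by
      apply LinearMap.ext; intro x; apply LinearMap.ext; intro y
      simp only [LinearMap.flip_apply, innerₗ_apply_apply]
      exact real_inner_comm x y
    have h := VectorFourier.integral_fourierIntegral_smul_eq_flip
      (e := Real.fourierChar) (L := innerₗ R2) (μ := volume) (ν := volume)
      Real.continuous_fourierChar hL u.integrable hWint
    rw [hLflip] at h
    exact h
  -- V bound
  have hVbd : ∀ y : R2, ‖V y‖ ≤ SchwartzMap.seminorm ℝ 0 0 V := fun y => by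
    simpa using V.le_seminorm ℝ 0 0 y
  -- main computation
  calc (∫ x₁ : R2, ∫ x₂ : R2, V (x₁ - x₂) * ((‖ψ (pack x₁ x₂)‖ ^ 2 : ℝ) : ℂ))
      = ∫ x₁ : R2, ∫ x₂ : R2, V (x₁ - x₂) * Φ (pack x₁ x₂) := by
        simp_rw [hΦ']
    _ = ∫ y : R2, V y * W y :=
        fubini_key Φ (⇑V) V.continuous (SchwartzMap.seminorm ℝ 0 0 V) hVbd
    _ = ∫ ξ : R2, 𝓕 (⇑u) ξ * W ξ := by rw [huF]
    _ = ∫ x : R2, u x * 𝓕 W x := hflip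
    _ = ∫ x : R2, 𝓕 W x := by
        congr 1
        ext x
        by_cases h : ‖x‖ ≤ 2 * R
        · rw [huval x h, one_mul]
        · push_neg at h
          rw [hsupp x h, mul_zero]
    _ = W 0 := by
        have h := hWint.fourierInv_fourier_eq (v := 0) hFWint hWcont.continuousAt
        rw [← h, Real.fourierInv_eq]
        simp [Circle.smul_def]
    _ = ((∫ x : R2, ‖ψ (pack x x)‖ ^ 2 : ℝ) : ℂ) := by
        rw [hW]
        simp_rw [sub_zero, ← hΦ']
        exact integral_ofReal
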